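/- Let {F_1,…,F_k} be a set of k mutually orthogonal binary frequency squares of type (n;λ0,λ1) with ℤ-sum M. Then there exists a set {F'_1,…,F'_k} of k mutually orthogonal binary frequency squares of type (n+kλ1; n+(k−1)λ1, λ1) whose ℤ-sum is the block matrix of order n+kλ1 with M in the top-left n×n corner, the all-ones matrix J_{kλ1} in the bottom-right kλ1×kλ1 corner, and zeros elsewhere. -/

import Mathlib

open Finset

/-- A binary frequency square of type `(n; n - lam1, lam1)`: an `n × n` `(0,1)`-matrix
with exactly `lam1` ones (hence `n - lam1` zeros) in every row and every column. -/
def IsBFS (n lam1 : ℕ) (F : Fin n → Fin n → ℕ) : Prop :=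
  (∀ i j, F i j = 0 ∨ F i j = 1) ∧
  (∀ i : Fin n, (univ.filter (fun j => F i j = 1)).card = lam1) ∧
  (∀ j : Fin n, (univ.filter (fun i => F i j = 1)).card = lam1)

/-- Two binary frequency squares (with `lam1` resp. `mu1` ones per row and column)
are orthogonal: the number of cells in which both have entry 1 equals `lam1 * mu1`. -/
def OrthBFS (n lam1 mu1 : ℕ) (F G : Fin n → Fin n → ℕ) : Prop :=
  ((univ : Finset (Fin n × Fin n)).filter
    (fun p => F p.1 p.2 = 1 ∧ G p.1 p.2 = 1)).card = lam1 * mu1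

/- ------------------- auxiliary lemmas ------------------- -/

private lemma div_eq_iff' {a b c : ℕ} (hb : 0 < b) : a / b = c ↔ c * b ≤ a ∧ a < c * b + b := by
  constructor
  · rintro rfl
    refine ⟨Nat.div_mul_le_self a b, ?_⟩
    have h1 := Nat.div_add_mod a b
    have h2 := Nat.mod_lt a hb
    have h3 : a / b * b = b * (a / b) := by ring
    omega
  · rintro ⟨h1, h2⟩
    refine Nat.div_eq_of_lt_le h1 ?_
    have : (c + 1) * b = c * b + b := by ring
    omega

private lemma add_mod_cancel'' {k t a a' : ℕ} (ha : a < k) (ha' : a' < k)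
    (h : (a + t) % k = (a' + t) % k) : a = a' := by
  have h2 : a ≡ a' [MOD k] := Nat.ModEq.add_right_cancel' t h
  have e1 := Nat.mod_eq_of_lt ha
  have e2 := Nat.mod_eq_of_lt ha'
  have h3 : a % k = a' % k := h2
  omega

private lemma shift_exists {k t b : ℕ} (hk : 0 < k) (hb : b < k) :
    ∃ a, a < k ∧ (a + t) % k = b := by
  refine ⟨(b + (k - t % k)) % k, Nat.mod_lt _ hk, ?_⟩
  rw [Nat.mod_add_mod]
  have h1 : t % k < k := Nat.mod_lt _ hk
  have h2 := Nat.div_add_mod t k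
  have h3 : b + (k - t % k) + t = b + k * (t / k + 1) := by
    have h4 : k * (t / k + 1) = k * (t / k) + k := by ring
    omega
  rw [h3, Nat.add_mul_mod_self_left, Nat.mod_eq_of_lt hb]

private lemma count_block (n k lam1 c : ℕ) (hc : c < k) :
    ((univ : Finset (Fin (n + k * lam1))).filter
      (fun j : Fin (n + k * lam1) => n ≤ (j : ℕ) ∧ ((j : ℕ) - n) / lam1 = c)).card = lam1 := by
  rcases Nat.eq_zero_or_pos lam1 with h0 | hpos
  · subst h0
    rw [Finset.card_eq_zero, Finset.filter_eq_empty_iff]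
    intro j _
    have := j.isLt
    omega
  · have hmul : (c + 1) * lam1 ≤ k * lam1 := Nat.mul_le_mul_right _ hc
    have hmul' : (c + 1) * lam1 = c * lam1 + lam1 := by ring
    have key : ((univ : Finset (Fin (n + k * lam1))).filter
        (fun j : Fin (n + k * lam1) => n ≤ (j : ℕ) ∧ ((j : ℕ) - n) / lam1 = c)).card
        = (Finset.range lam1).card := by
      refine Finset.card_bij' (fun j _ => (j : ℕ) - n - c * lam1)
        (fun r hr => (⟨n + c * lam1 + r, by
          simp only [Finset.mem_range] at hr; omega⟩ : Fin (n + k * lam1)))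
        ?_ ?_ ?_ ?_
      · intro a ha
        simp only [Finset.mem_filter, Finset.mem_univ, true_and] at ha
        obtain ⟨h1, h2⟩ := ha
        rw [div_eq_iff' hpos] at h2
        have := a.isLt
        simp only [Finset.mem_range]
        show (a : ℕ) - n - c * lam1 < lam1
        omega
      · intro r hr
        simp only [Finset.mem_range] at hr
        simp only [Finset.mem_filter, Finset.mem_univ, true_and]
        refine ⟨by omega, ?_⟩
        show (n + c * lam1 + r - n) / lam1 = c
        rw [div_eq_iff' hpos]
        omega
      · intro a ha
        simp only [Finset.mem_filter, Finset.mem_univ, true_and] at ha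
        obtain ⟨h1, h2⟩ := ha
        rw [div_eq_iff' hpos] at h2
        apply Fin.ext
        show n + c * lam1 + ((a : ℕ) - n - c * lam1) = (a : ℕ)
        omega
      · intro r hr
        simp only [Finset.mem_range] at hr
        show n + c * lam1 + r - n - c * lam1 = r
        omega
    rw [key, Finset.card_range]

private lemma card_cast {n m : ℕ} (P : Fin (n + m) → Prop) (Q : Fin n → Prop)
    [DecidablePred P] [DecidablePred Q]
    (h : ∀ j : Fin (n + m), P j ↔ ∃ hj : (j : ℕ) < n, Q ⟨(j : ℕ), hj⟩) :
    (univ.filter P).card = (univ.filter Q).card := by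
  have key : univ.filter P = (univ.filter Q).image (Fin.castLE (Nat.le_add_right n m)) := by
    ext j
    simp only [Finset.mem_filter, Finset.mem_univ, true_and, Finset.mem_image]
    rw [h]
    constructor
    · rintro ⟨hj, hq⟩
      exact ⟨⟨(j : ℕ), hj⟩, hq, by apply Fin.ext; rfl⟩
    · rintro ⟨a, hq, rfl⟩
      refine ⟨a.isLt, ?_⟩
      have ha : (⟨((Fin.castLE (Nat.le_add_right n m) a : Fin (n + m)) : ℕ), a.isLt⟩ : Fin n)
          = a := Fin.ext rfl
      rw [ha]; exact hq
  rw [key, Finset.card_image_of_injective _ (Fin.castLE_injective _)]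

private lemma card_cast2 {n m : ℕ} (P : Fin (n + m) × Fin (n + m) → Prop)
    (Q : Fin n × Fin n → Prop) [DecidablePred P] [DecidablePred Q]
    (h : ∀ p : Fin (n + m) × Fin (n + m),
      P p ↔ ∃ (hi : (p.1 : ℕ) < n) (hj : (p.2 : ℕ) < n), Q (⟨(p.1 : ℕ), hi⟩, ⟨(p.2 : ℕ), hj⟩)) :
    (univ.filter P).card = (univ.filter Q).card := by
  set f : Fin n × Fin n → Fin (n + m) × Fin (n + m) :=
    fun p => (Fin.castLE (Nat.le_add_right n m) p.1, Fin.castLE (Nat.le_add_right n m) p.2)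
    with hf
  have hinj : Function.Injective f := by
    intro p q hpq
    have h1 := congrArg Prod.fst hpq
    have h2 := congrArg Prod.snd hpq
    exact Prod.ext (Fin.castLE_injective (Nat.le_add_right n m) h1)
      (Fin.castLE_injective (Nat.le_add_right n m) h2)
  have key : univ.filter P = (univ.filter Q).image f := by
    ext p
    simp only [Finset.mem_filter, Finset.mem_univ, true_and, Finset.mem_image]
    rw [h]
    constructor
    · rintro ⟨hi, hj, hq⟩
      exact ⟨(⟨(p.1 : ℕ), hi⟩, ⟨(p.2 : ℕ), hj⟩), hq, by
        apply Prod.ext <;> apply Fin.ext <;> rfl⟩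
    · rintro ⟨a, hq, rfl⟩
      refine ⟨a.1.isLt, a.2.isLt, ?_⟩
      have ha : ((⟨(((f a).1 : Fin (n + m)) : ℕ), a.1.isLt⟩ : Fin n),
          (⟨(((f a).2 : Fin (n + m)) : ℕ), a.2.isLt⟩ : Fin n)) = a := by
        apply Prod.ext <;> apply Fin.ext <;> rfl
      rw [ha]; exact hq
  rw [key, Finset.card_image_of_injective _ hinj]

/-- The extended square: `F t` in the top-left corner, a block-shifted all-ones
pattern in the bottom-right corner. -/
private def cornerExt (k n lam1 : ℕ) (F : Fin k → Fin n → Fin n → ℕ) (t : Fin k)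
    (i j : Fin (n + k * lam1)) : ℕ :=
  if hi : (i : ℕ) < n then
    if hj : (j : ℕ) < n then F t ⟨(i : ℕ), hi⟩ ⟨(j : ℕ), hj⟩ else 0
  else if (j : ℕ) < n then 0
  else if (((i : ℕ) - n) / lam1 + (t : ℕ)) % k = ((j : ℕ) - n) / lam1 then 1 else 0

theorem stmt10 (k n lam0 lam1 : ℕ) (hlam : lam0 + lam1 = n)
    (F : Fin k → Fin n → Fin n → ℕ)
    (hF : ∀ t, IsBFS n lam1 (F t))
    (hMO : ∀ s t, s ≠ t → OrthBFS n lam1 lam1 (F s) (F t)) :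
    ∃ F' : Fin k → Fin (n + k * lam1) → Fin (n + k * lam1) → ℕ,
      (∀ t, IsBFS (n + k * lam1) lam1 (F' t)) ∧
      (∀ s t, s ≠ t → OrthBFS (n + k * lam1) lam1 lam1 (F' s) (F' t)) ∧
      (∀ i j : Fin n,
        ∑ t, F' t (Fin.castLE (Nat.le_add_right n (k * lam1)) i)
               (Fin.castLE (Nat.le_add_right n (k * lam1)) j) = ∑ t, F t i j) ∧
      (∀ i j : Fin (n + k * lam1), (i : ℕ) < n → n ≤ (j : ℕ) → ∑ t, F' t i j = 0) ∧
      (∀ i j : Fin (n + k * lam1), n ≤ (i : ℕ) → (j : ℕ) < n → ∑ t, F' t i j = 0) ∧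
      (∀ i j : Fin (n + k * lam1), n ≤ (i : ℕ) → n ≤ (j : ℕ) → ∑ t, F' t i j = 1) := by
  have hbig : ∀ i : Fin (n + k * lam1), ¬ (i : ℕ) < n → 0 < k ∧ 0 < lam1 := by
    intro i hi
    have h1 := i.isLt
    have hkl : 0 < k * lam1 := by
      rcases Nat.eq_zero_or_pos (k * lam1) with h | h
      · omega
      · exact h
    constructor
    · rcases Nat.eq_zero_or_pos k with h | h
      · subst h; simp at hkl
      · exact h
    · rcases Nat.eq_zero_or_pos lam1 with h | h
      · subst h; simp at hkl
      · exact h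
  have hdivk : ∀ i : Fin (n + k * lam1), ¬ (i : ℕ) < n → ((i : ℕ) - n) / lam1 < k := by
    intro i hi
    obtain ⟨hk, hl⟩ := hbig i hi
    rw [Nat.div_lt_iff_lt_mul hl]
    have := i.isLt
    omega
  refine ⟨cornerExt k n lam1 F, ?_, ?_, ?_, ?_, ?_, ?_⟩
  · -- each extended square is a BFS
    intro t
    refine ⟨?_, ?_, ?_⟩
    · intro i j
      simp only [cornerExt]
      split_ifs with h1 h2 h3 h4
      · exact (hF t).1 _ _
      all_goals simp
    · -- rows
      intro i
      by_cases hi : (i : ℕ) < n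
      · rw [card_cast (fun j => cornerExt k n lam1 F t i j = 1)
            (fun j => F t ⟨(i : ℕ), hi⟩ j = 1) ?_]
        · exact (hF t).2.1 _
        · intro j
          simp only [cornerExt]
          rw [dif_pos hi]
          constructor
          · intro hj1
            by_cases hj : (j : ℕ) < n
            · rw [dif_pos hj] at hj1; exact ⟨hj, hj1⟩
            · rw [dif_neg hj] at hj1; exact absurd hj1 (by omega)
          · rintro ⟨hj, hq⟩
            rw [dif_pos hj]; exact hq
      · obtain ⟨hk, hl⟩ := hbig i hi
        set c := (((i : ℕ) - n) / lam1 + (t : ℕ)) % k with hc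
        have hck : c < k := Nat.mod_lt _ hk
        have hre : (univ.filter (fun j : Fin (n + k * lam1) => cornerExt k n lam1 F t i j = 1))
            = univ.filter (fun j : Fin (n + k * lam1) =>
                n ≤ (j : ℕ) ∧ ((j : ℕ) - n) / lam1 = c) := by
          ext j
          simp only [Finset.mem_filter, Finset.mem_univ, true_and]
          simp only [cornerExt]
          rw [dif_neg hi]
          by_cases hj : (j : ℕ) < n
          · rw [if_pos hj]
            constructor
            · intro h'; omega
            · intro h'; omega
          · rw [if_neg hj]
            constructor
            · intro h1
              by_cases hcc : c = ((j : ℕ) - n) / lam1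
              · exact ⟨by omega, hcc.symm⟩
              · rw [if_neg hcc] at h1; exact absurd h1 (by omega)
            · rintro ⟨-, h2⟩
              rw [if_pos h2.symm]
        rw [hre, count_block _ _ _ _ hck]
    · -- columns
      intro j
      by_cases hj : (j : ℕ) < n
      · rw [card_cast (fun i => cornerExt k n lam1 F t i j = 1)
            (fun i => F t i ⟨(j : ℕ), hj⟩ = 1) ?_]
        · exact (hF t).2.2 _
        · intro i
          simp only [cornerExt]
          constructor
          · intro hi1
            by_cases hi : (i : ℕ) < n
            · rw [dif_pos hi, dif_pos hj] at hi1; exact ⟨hi, hi1⟩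
            · rw [dif_neg hi, if_pos hj] at hi1; exact absurd hi1 (by omega)
          · rintro ⟨hi, hq⟩
            rw [dif_pos hi, dif_pos hj]; exact hq
      · obtain ⟨hk, hl⟩ := hbig j hj
        set b := ((j : ℕ) - n) / lam1 with hb
        have hbk : b < k := hdivk j hj
        obtain ⟨a0, ha0k, ha0⟩ := shift_exists (t := (t : ℕ)) hk hbk
        have hre : (univ.filter (fun i : Fin (n + k * lam1) => cornerExt k n lam1 F t i j = 1))
            = univ.filter (fun i : Fin (n + k * lam1) =>
                n ≤ (i : ℕ) ∧ ((i : ℕ) - n) / lam1 = a0) := by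
          ext i
          simp only [Finset.mem_filter, Finset.mem_univ, true_and]
          simp only [cornerExt]
          by_cases hi : (i : ℕ) < n
          · rw [dif_pos hi, dif_neg hj]
            constructor
            · intro h'; omega
            · intro h'; omega
          · rw [dif_neg hi, if_neg hj]
            have hak : ((i : ℕ) - n) / lam1 < k := hdivk i hi
            constructor
            · intro h1
              by_cases hcc : (((i : ℕ) - n) / lam1 + (t : ℕ)) % k = b
              · refine ⟨by omega, ?_⟩
                exact add_mod_cancel'' hak ha0k (by rw [hcc, ha0])
              · rw [if_neg hcc] at h1; exact absurd h1 (by omega)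
            · rintro ⟨-, h2⟩
              rw [if_pos (by rw [h2, ha0])]
        rw [hre, count_block _ _ _ _ ha0k]
  · -- mutual orthogonality
    intro s t hst
    unfold OrthBFS
    rw [card_cast2
        (fun p => cornerExt k n lam1 F s p.1 p.2 = 1 ∧ cornerExt k n lam1 F t p.1 p.2 = 1)
        (fun p => F s p.1 p.2 = 1 ∧ F t p.1 p.2 = 1) ?_]
    · exact hMO s t hst
    · intro p
      simp only [cornerExt]
      constructor
      · rintro ⟨h1, h2⟩
        by_cases hi : (p.1 : ℕ) < n
        · by_cases hj : (p.2 : ℕ) < n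
          · rw [dif_pos hi, dif_pos hj] at h1 h2
            exact ⟨hi, hj, h1, h2⟩
          · rw [dif_pos hi, dif_neg hj] at h1
            exact absurd h1 (by omega)
        · rw [dif_neg hi] at h1 h2
          by_cases hj : (p.2 : ℕ) < n
          · rw [if_pos hj] at h1
            exact absurd h1 (by omega)
          · rw [if_neg hj] at h1 h2
            exfalso
            have hcs : (((p.1 : ℕ) - n) / lam1 + (s : ℕ)) % k = ((p.2 : ℕ) - n) / lam1 := by
              by_contra hcc
              rw [if_neg hcc] at h1; omega
            have hct : (((p.1 : ℕ) - n) / lam1 + (t : ℕ)) % k = ((p.2 : ℕ) - n) / lam1 := by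
              by_contra hcc
              rw [if_neg hcc] at h2; omega
            have hst' : (s : ℕ) = (t : ℕ) := by
              refine add_mod_cancel'' (t := ((p.1 : ℕ) - n) / lam1) s.isLt t.isLt ?_
              rw [Nat.add_comm _ (((p.1 : ℕ) - n) / lam1),
                Nat.add_comm _ (((p.1 : ℕ) - n) / lam1), hcs, hct]
            exact hst (Fin.ext hst')
      · rintro ⟨hi, hj, hq1, hq2⟩
        simp only [dif_pos hi, dif_pos hj]
        exact ⟨hq1, hq2⟩
  · -- top-left sum
    intro i j
    refine Finset.sum_congr rfl fun t _ => ?_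
    simp only [cornerExt, Fin.coe_castLE]
    rw [dif_pos i.isLt, dif_pos j.isLt]
  · -- top-right zeros
    intro i j hi hj
    refine Finset.sum_eq_zero fun t _ => ?_
    simp only [cornerExt]
    rw [dif_pos hi, dif_neg (by omega)]
  · -- bottom-left zeros
    intro i j hi hj
    refine Finset.sum_eq_zero fun t _ => ?_
    simp only [cornerExt]
    rw [dif_neg (by omega), if_pos hj]
  · -- bottom-right all ones
    intro i j hi hj
    have hineg : ¬ (i : ℕ) < n := by omega
    have hjneg : ¬ (j : ℕ) < n := by omega
    obtain ⟨hk, hl⟩ := hbig i hineg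
    set a := ((i : ℕ) - n) / lam1 with ha
    set b := ((j : ℕ) - n) / lam1 with hb
    have hak : a < k := hdivk i hineg
    have hbk : b < k := hdivk j hjneg
    have hterm : ∀ t : Fin k, cornerExt k n lam1 F t i j
        = if (a + (t : ℕ)) % k = b then 1 else 0 := by
      intro t
      simp only [cornerExt]
      rw [dif_neg hineg, if_neg hjneg]
    simp only [hterm]
    rw [Finset.sum_boole, Nat.cast_id]
    obtain ⟨t0, ht0k, ht0⟩ := shift_exists (t := a) hk hbk
    rw [Finset.card_eq_one]
    refine ⟨⟨t0, ht0k⟩, ?_⟩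
    ext t'
    simp only [Finset.mem_filter, Finset.mem_univ, true_and, Finset.mem_singleton]
    constructor
    · intro h1
      apply Fin.ext
      show (t' : ℕ) = t0
      refine add_mod_cancel'' (t := a) t'.isLt ht0k ?_
      rw [Nat.add_comm (t' : ℕ) a, h1, ← ht0]
    · rintro rfl
      show (a + t0) % k = b
      rw [Nat.add_comm a t0, ht0]
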